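/- Fix 0 < θ < 1 and let k = n^θ, m = c·k·log(n/k) with c·log 2 = 1 + ε for some ε > 0. Then the sum over 0 ≤ ℓ ≤ k(1 - 1/log n) of (Δk)^{3/2} · (e²·(k/n)^{c log 2 - 1 + o(1)}/(1-ℓ/k)²)^{(1-ℓ/k)·k} tends to 0 as n → ∞, where Δ = Θ(log n). -/
import Mathlib


open Filter Finset

private lemma log_le_rpow_ev (r : ℝ) (hr : 0 < r) :
    ∀ᶠ n : ℕ in atTop, Real.log n ≤ (n : ℝ) ^ r := by
  have h := (isLittleO_log_rpow_atTop hr).def one_pos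
  filter_upwards [tendsto_natCast_atTop_atTop.eventually h] with n hn
  calc Real.log n ≤ ‖Real.log n‖ := le_abs_self _
    _ ≤ 1 * ‖(n : ℝ) ^ r‖ := hn
    _ = (n : ℝ) ^ r := by
        rw [one_mul, Real.norm_eq_abs, abs_of_nonneg (Real.rpow_nonneg (Nat.cast_nonneg n) r)]

private lemma aux2 (θ : ℝ) (hθ : 0 < θ) :
    Tendsto (fun n : ℕ => (n : ℝ) ^ (4 : ℝ) * (1/2 : ℝ) ^ ((n : ℝ) ^ (θ/2))) atTop (nhds 0) := by
  have h2 : (0:ℝ) < Real.log 2 := Real.log_pos one_lt_two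
  have hF := tendsto_rpow_mul_exp_neg_mul_atTop_nhds_zero (8/θ) (Real.log 2) h2
  have hcomp : Tendsto (fun n : ℕ => (n : ℝ) ^ (θ/2)) atTop atTop :=
    (tendsto_rpow_atTop (by positivity)).comp tendsto_natCast_atTop_atTop
  refine Tendsto.congr' ?_ (hF.comp hcomp)
  filter_upwards [eventually_ge_atTop 1] with n hn
  have hn0 : (0:ℝ) < n := by exact_mod_cast hn
  show ((n : ℝ) ^ (θ/2)) ^ (8/θ) * Real.exp (-Real.log 2 * ((n : ℝ) ^ (θ/2))) = _
  have e1 : ((n : ℝ) ^ (θ/2)) ^ (8/θ) = (n : ℝ) ^ (4 : ℝ) := by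
    rw [← Real.rpow_mul hn0.le]
    congr 1
    field_simp
    ring
  have e2 : (1/2 : ℝ) ^ ((n : ℝ) ^ (θ/2)) = Real.exp (-Real.log 2 * ((n : ℝ) ^ (θ/2))) := by
    rw [Real.rpow_def_of_pos (by norm_num : (0:ℝ) < 1/2), one_div, Real.log_inv]
  rw [e1, e2]

set_option maxHeartbeats 1000000 in
/-- Final summation step of the small-overlap first-moment bound: with `k = n^θ`,
`Δ = Θ(log n)` and `c log 2 = 1 + ε`, the sum over `0 ≤ ℓ ≤ k (1 - 1/log n)` of
`(Δ k)^{3/2} (e² (k/n)^{c log 2 - 1 + o(1)} / (1 - ℓ/k)²)^{(1 - ℓ/k) k}` tends to `0`. -/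
theorem stmt16 (θ ε c : ℝ) (hθ0 : 0 < θ) (hθ1 : θ < 1) (hε : 0 < ε)
    (hc : c * Real.log 2 = 1 + ε)
    (k Δ : ℕ → ℕ) (hk : ∀ n, k n = ⌊(n : ℝ) ^ θ⌋₊)
    (hΔ : ∃ C₁ C₂ : ℝ, 0 < C₁ ∧ 0 < C₂ ∧ ∀ᶠ n : ℕ in atTop,
        C₁ * Real.log n ≤ (Δ n : ℝ) ∧ (Δ n : ℝ) ≤ C₂ * Real.log n)
    (η : ℕ → ℝ) (hη : Tendsto η atTop (nhds 0)) :
    Tendsto (fun n : ℕ => ∑ ℓ ∈ Finset.range (k n),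
        (if (ℓ : ℝ) ≤ (k n : ℝ) * (1 - 1 / Real.log n) then
          ((Δ n * k n : ℝ)) ^ ((3 : ℝ)/2) *
            ((Real.exp 1) ^ 2 * ((k n : ℝ) / n) ^ (c * Real.log 2 - 1 + η n)
              / (1 - (ℓ : ℝ) / k n) ^ 2) ^ ((1 - (ℓ : ℝ) / k n) * (k n : ℝ))
        else 0)) atTop (nhds 0) := by
  have h1θ : 0 < 1 - θ := by linarith
  set γ : ℝ := (1 - θ) * ε / 2 with hγdef
  have hγ : 0 < γ := by positivity
  obtain ⟨C₁, C₂, hC₁, hC₂, hΔev⟩ := hΔ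
  have hE3 : ∀ᶠ n : ℕ in atTop, -(ε/2) ≤ η n :=
    hη.eventually (eventually_ge_nhds (by linarith))
  have hE5 := log_le_rpow_ev (γ/4) (by positivity)
  have hE9 := log_le_rpow_ev (θ/4) (by positivity)
  have hE7a := log_le_rpow_ev (1/2) (by norm_num)
  have hrt : Tendsto (fun n : ℕ => (n:ℝ) ^ ((1:ℝ)/2)) atTop atTop :=
    (tendsto_rpow_atTop (by norm_num)).comp tendsto_natCast_atTop_atTop
  have hE7b : ∀ᶠ n : ℕ in atTop, C₂ ≤ (n:ℝ) ^ ((1:ℝ)/2) := hrt.eventually_ge_atTop C₂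
  have hE8 : ∀ᶠ n : ℕ in atTop, (2:ℝ) ≤ (n:ℝ) ^ (θ/4) :=
    (((tendsto_rpow_atTop (by positivity)).comp
      tendsto_natCast_atTop_atTop).eventually_ge_atTop 2)
  have hE6 : ∀ᶠ n : ℕ in atTop, Real.exp 1 ^ 2 * (n:ℝ) ^ (-(γ/2)) ≤ 1/2 := by
    have ht : Tendsto (fun n : ℕ => Real.exp 1 ^ 2 * (n:ℝ) ^ (-(γ/2))) atTop
        (nhds (Real.exp 1 ^ 2 * 0)) :=
      ((tendsto_rpow_neg_atTop (by positivity)).comp tendsto_natCast_atTop_atTop).const_mul _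
    rw [mul_zero] at ht
    exact ht.eventually (eventually_le_nhds (by norm_num))
  apply squeeze_zero' ?_ ?_ (aux2 θ hθ0)
  · filter_upwards with n
    apply Finset.sum_nonneg
    intro ℓ _
    split
    · positivity
    · exact le_refl 0
  filter_upwards [eventually_ge_atTop 3, hE3, hE5, hE6, hE7a, hE7b, hE8, hE9, hΔev] with n hn3
    hη2 hlogγ h6 h7a h7b h8 hlogθ hΔn
  have hn3R : (3:ℝ) ≤ n := by exact_mod_cast hn3
  have hn0 : (0:ℝ) < n := by linarith
  have hn1 : (1:ℝ) ≤ n := by linarith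
  set L := Real.log n with hLdef
  have hL1 : 1 ≤ L := by
    rw [hLdef, Real.le_log_iff_exp_le hn0]
    have := Real.exp_one_lt_d9
    linarith
  have hL0 : 0 < L := by linarith
  have hknn : (0:ℝ) ≤ (n:ℝ) ^ θ := Real.rpow_nonneg hn0.le θ
  have hkub : (k n : ℝ) ≤ (n:ℝ) ^ θ := by rw [hk n]; exact Nat.floor_le hknn
  have hklb : (n:ℝ) ^ θ - 1 ≤ (k n : ℝ) := by
    rw [hk n]; have := Nat.lt_floor_add_one ((n:ℝ) ^ θ); linarith
  have h1nθ : 1 ≤ (n:ℝ) ^ θ := by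
    calc (1:ℝ) = (1:ℝ) ^ θ := (Real.one_rpow θ).symm
      _ ≤ (n:ℝ) ^ θ := Real.rpow_le_rpow zero_le_one hn1 hθ0.le
  have hk1 : 1 ≤ k n := by rw [hk n]; exact Nat.le_floor (by exact_mod_cast h1nθ)
  have hkR1 : (1:ℝ) ≤ (k n : ℝ) := by exact_mod_cast hk1
  have hkpos : (0:ℝ) < (k n : ℝ) := by linarith
  have hkn : (k n : ℝ) ≤ n := by
    calc (k n : ℝ) ≤ (n:ℝ) ^ θ := hkub
      _ ≤ (n:ℝ) ^ (1:ℝ) := Real.rpow_le_rpow_of_exponent_le hn1 hθ1.le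
      _ = n := Real.rpow_one n
  -- k is large: n^{θ/2} * L ≤ k
  have hfrac : (n:ℝ) ^ (θ/2) * L ≤ (k n : ℝ) := by
    have hA1 : (1:ℝ) ≤ (n:ℝ) ^ (θ/2) := by
      calc (1:ℝ) = (1:ℝ) ^ (θ/2) := (Real.one_rpow _).symm
        _ ≤ (n:ℝ) ^ (θ/2) := Real.rpow_le_rpow zero_le_one hn1 (by positivity)
    have hAB1 : (1:ℝ) ≤ (n:ℝ) ^ (θ/2) * (n:ℝ) ^ (θ/4) := by
      nlinarith [Real.rpow_nonneg hn0.le (θ/2)]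
    have hsplit : (n:ℝ) ^ (θ/2) * (n:ℝ) ^ (θ/4) * (n:ℝ) ^ (θ/4) = (n:ℝ) ^ θ := by
      rw [← Real.rpow_add hn0, ← Real.rpow_add hn0]; ring_nf
    have h1 : (n:ℝ) ^ (θ/2) * L ≤ (n:ℝ) ^ (θ/2) * (n:ℝ) ^ (θ/4) := by
      apply mul_le_mul_of_nonneg_left hlogθ (Real.rpow_nonneg hn0.le _)
    nlinarith [Real.rpow_nonneg hn0.le (θ/2), Real.rpow_nonneg hn0.le (θ/4)]
  obtain ⟨hΔl, hΔu⟩ := hΔn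
  have hΔle : (Δ n : ℝ) ≤ n := by
    calc (Δ n : ℝ) ≤ C₂ * L := hΔu
      _ ≤ (n:ℝ) ^ ((1:ℝ)/2) * (n:ℝ) ^ ((1:ℝ)/2) :=
          mul_le_mul h7b h7a (by linarith) (Real.rpow_nonneg hn0.le _)
      _ = (n:ℝ) := by rw [← Real.rpow_add hn0]; norm_num
  -- per-term bound
  have hterm : ∀ ℓ ∈ Finset.range (k n),
      (if (ℓ : ℝ) ≤ (k n : ℝ) * (1 - 1 / Real.log n) then
          ((Δ n * k n : ℝ)) ^ ((3 : ℝ)/2) *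
            ((Real.exp 1) ^ 2 * ((k n : ℝ) / n) ^ (c * Real.log 2 - 1 + η n)
              / (1 - (ℓ : ℝ) / k n) ^ 2) ^ ((1 - (ℓ : ℝ) / k n) * (k n : ℝ))
        else 0) ≤
      ((Δ n * k n : ℝ)) ^ ((3:ℝ)/2) * (1/2 : ℝ) ^ ((k n : ℝ) / L) := by
    intro ℓ _
    split_ifs with hcond
    swap
    · positivity
    set β : ℝ := 1 - (ℓ:ℝ) / (k n) with hβ
    have hβl : 1/L ≤ β := by
      have h : (ℓ:ℝ) / (k n) ≤ 1 - 1/L := by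
        rw [div_le_iff₀ hkpos]
        rw [← hLdef] at hcond
        linarith [hcond]
      rw [hβ]; linarith
    have hβ0 : 0 < β := lt_of_lt_of_le (by positivity) hβl
    set δ : ℝ := c * Real.log 2 - 1 + η n with hδdef
    have hδ : ε/2 ≤ δ := by rw [hδdef]; linarith
    set x : ℝ := (k n : ℝ) / n with hx
    have hx0 : 0 < x := div_pos hkpos hn0
    have hx1 : x ≤ 1 := (div_le_one hn0).mpr hkn
    have hxd : x ^ δ ≤ (n:ℝ) ^ (-γ) := by
      have hxle : x ≤ (n:ℝ) ^ (θ - 1) := by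
        rw [hx, Real.rpow_sub hn0, Real.rpow_one]
        gcongr
      calc x ^ δ ≤ x ^ (ε/2) := Real.rpow_le_rpow_of_exponent_ge hx0 hx1 hδ
        _ ≤ ((n:ℝ) ^ (θ - 1)) ^ (ε/2) := Real.rpow_le_rpow hx0.le hxle (by positivity)
        _ = (n:ℝ) ^ (-γ) := by
            rw [← Real.rpow_mul hn0.le]; congr 1; rw [hγdef]; ring
    set a : ℝ := Real.exp 1 ^ 2 * x ^ δ with ha
    have ha0 : 0 ≤ a := by positivity
    have hL2 : L ^ 2 ≤ (n:ℝ) ^ (γ/2) := by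
      calc L ^ 2 ≤ ((n:ℝ) ^ (γ/4)) ^ 2 := by
            apply pow_le_pow_left₀ (by linarith) hlogγ
        _ = (n:ℝ) ^ (γ/2) := by
            rw [← Real.rpow_natCast ((n:ℝ) ^ (γ/4)) 2, ← Real.rpow_mul hn0.le]
            congr 1; push_cast; ring
    have hbase : a / β ^ 2 ≤ 1/2 := by
      have hββ : (1/L) ^ 2 ≤ β ^ 2 := by
        apply pow_le_pow_left₀ (by positivity) hβl
      have h1 : a / β ^ 2 ≤ a / (1/L) ^ 2 := by
        apply div_le_div_of_nonneg_left ha0 (by positivity) hββ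
      have h2 : a / (1/L) ^ 2 = a * L ^ 2 := by field_simp
      calc a / β ^ 2 ≤ a * L ^ 2 := by rw [← h2]; exact h1
        _ ≤ (Real.exp 1 ^ 2 * (n:ℝ) ^ (-γ)) * (n:ℝ) ^ (γ/2) := by
            apply mul_le_mul ?_ hL2 (by positivity) (by positivity)
            rw [ha]
            exact mul_le_mul_of_nonneg_left hxd (by positivity)
        _ = Real.exp 1 ^ 2 * (n:ℝ) ^ (-(γ/2)) := by
            rw [mul_assoc, ← Real.rpow_add hn0]
            congr 2; ring
        _ ≤ 1/2 := h6
    have hexp0 : 0 ≤ β * (k n : ℝ) := by positivity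
    have hexpge : (k n : ℝ) / L ≤ β * (k n : ℝ) := by
      have h : (k n : ℝ) / L = (1/L) * (k n : ℝ) := by ring
      rw [h]
      exact mul_le_mul_of_nonneg_right hβl hkpos.le
    apply mul_le_mul_of_nonneg_left ?_ (by positivity)
    calc (a / β ^ 2) ^ (β * (k n : ℝ)) ≤ (1/2 : ℝ) ^ (β * (k n : ℝ)) :=
          Real.rpow_le_rpow (by positivity) hbase hexp0
      _ ≤ (1/2 : ℝ) ^ ((k n : ℝ) / L) :=
          Real.rpow_le_rpow_of_exponent_ge (by norm_num) (by norm_num) hexpge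
  calc (∑ ℓ ∈ Finset.range (k n),
        (if (ℓ : ℝ) ≤ (k n : ℝ) * (1 - 1 / Real.log n) then
          ((Δ n * k n : ℝ)) ^ ((3 : ℝ)/2) *
            ((Real.exp 1) ^ 2 * ((k n : ℝ) / n) ^ (c * Real.log 2 - 1 + η n)
              / (1 - (ℓ : ℝ) / k n) ^ 2) ^ ((1 - (ℓ : ℝ) / k n) * (k n : ℝ))
        else 0))
      ≤ ∑ _ℓ ∈ Finset.range (k n),
          ((Δ n * k n : ℝ)) ^ ((3:ℝ)/2) * (1/2 : ℝ) ^ ((k n : ℝ) / L) :=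
        Finset.sum_le_sum hterm
    _ = (k n : ℝ) * (((Δ n * k n : ℝ)) ^ ((3:ℝ)/2) * (1/2 : ℝ) ^ ((k n : ℝ) / L)) := by
        rw [Finset.sum_const, Finset.card_range, nsmul_eq_mul]
    _ ≤ (n:ℝ) ^ (1:ℝ) * ((n:ℝ) ^ (3:ℝ) * (1/2 : ℝ) ^ ((n:ℝ) ^ (θ/2))) := by
        have hA : ((Δ n * k n : ℝ)) ^ ((3:ℝ)/2) ≤ (n:ℝ) ^ (3:ℝ) := by
          have hΔk : (Δ n : ℝ) * (k n : ℝ) ≤ (n:ℝ) * (n:ℝ) :=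
            mul_le_mul hΔle hkn hkpos.le hn0.le
          calc ((Δ n : ℝ) * (k n : ℝ)) ^ ((3:ℝ)/2) ≤ ((n:ℝ) * (n:ℝ)) ^ ((3:ℝ)/2) :=
                Real.rpow_le_rpow (by positivity) hΔk (by norm_num)
            _ = (n:ℝ) ^ (3:ℝ) := by
                rw [show (n:ℝ) * (n:ℝ) = (n:ℝ) ^ ((2:ℕ):ℝ) by
                  rw [Real.rpow_natCast]; ring]
                rw [← Real.rpow_mul hn0.le]; norm_num
        have hB : (1/2 : ℝ) ^ ((k n : ℝ) / L) ≤ (1/2 : ℝ) ^ ((n:ℝ) ^ (θ/2)) :=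
          Real.rpow_le_rpow_of_exponent_ge (by norm_num) (by norm_num)
            ((le_div_iff₀ hL0).mpr hfrac)
        have h1 : (k n : ℝ) ≤ (n:ℝ) ^ (1:ℝ) := by rw [Real.rpow_one]; exact hkn
        apply mul_le_mul h1 ?_ (by positivity) (by positivity)
        apply mul_le_mul hA hB (by positivity) (by positivity)
    _ = (n:ℝ) ^ (4:ℝ) * (1/2 : ℝ) ^ ((n:ℝ) ^ (θ/2)) := by
        rw [← mul_assoc, ← Real.rpow_add hn0]; norm_num
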